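/- Let P = {x ∈ R^m : Ax ≥ 0} be a rational cone with nonempty interior. Then the monoid P ∩ Z^m (under addition) is finitely generated. -/

import Mathlib

open scoped BigOperators

namespace GordanAux

variable {m K : ℕ}

/-- Index type for the Dickson embedding: `K` rows plus positive and negative parts. -/
abbrev Idx (m K : ℕ) := Fin K ⊕ (Fin m ⊕ Fin m)

def row (A : Matrix (Fin K) (Fin m) ℤ) (v : Fin m → ℤ) (i : Fin K) : ℤ :=
  ∑ j, A i j * v j

def memS (A : Matrix (Fin K) (Fin m) ℤ) (v : Fin m → ℤ) : Prop :=
  ∀ i, 0 ≤ row A v i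

/-- The embedding `v ↦ (Av, v⁺, v⁻)` into `ℕ^(K+2m)`. -/
def f (A : Matrix (Fin K) (Fin m) ℤ) (v : Fin m → ℤ) : Idx m K → ℕ
  | .inl i => (row A v i).toNat
  | .inr (.inl j) => (v j).toNat
  | .inr (.inr j) => (-v j).toNat

/-- Total size measure. -/
def μ (A : Matrix (Fin K) (Fin m) ℤ) (v : Fin m → ℤ) : ℕ := ∑ t, f A v t

lemma row_sub (A : Matrix (Fin K) (Fin m) ℤ) (x y : Fin m → ℤ) (i : Fin K) :
    row A (y - x) i = row A y i - row A x i := by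
  simp [row, mul_sub, Finset.sum_sub_distrib]

lemma f_inj {A : Matrix (Fin K) (Fin m) ℤ} {x y : Fin m → ℤ} (h : f A x = f A y) : x = y := by
  funext j
  have h1 := congrFun h (.inr (.inl j))
  have h2 := congrFun h (.inr (.inr j))
  simp only [f] at h1 h2
  omega

lemma step {A : Matrix (Fin K) (Fin m) ℤ} {x y : Fin m → ℤ}
    (hx : memS A x) (hy : memS A y) (hle : f A x ≤ f A y) :
    memS A (y - x) ∧ μ A (y - x) + μ A x = μ A y := by
  have hpt : ∀ t, f A x t ≤ f A y t := hle
  have hrow : ∀ i, row A x i ≤ row A y i := by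
    intro i
    have h := hpt (.inl i)
    have h1 := hx i
    have h2 := hy i
    simp only [f] at h
    omega
  constructor
  · intro i
    rw [row_sub]
    have := hrow i
    omega
  · unfold μ
    rw [← Finset.sum_add_distrib]
    apply Finset.sum_congr rfl
    rintro (i | j | j) -
    · have h := hrow i
      have h1 := hx i
      have h2 := hy i
      simp only [f, row_sub]
      omega
    · have h1 := hpt (.inr (.inl j))
      have h2 := hpt (.inr (.inr j))
      simp only [f, Pi.sub_apply] at h1 h2 ⊢
      omega
    · have h1 := hpt (.inr (.inl j))
      have h2 := hpt (.inr (.inr j))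
      simp only [f, Pi.sub_apply] at h1 h2 ⊢
      omega

lemma μ_pos {A : Matrix (Fin K) (Fin m) ℤ} {x : Fin m → ℤ} (hx : x ≠ 0) : 0 < μ A x := by
  obtain ⟨j, hj⟩ := Function.ne_iff.mp hx
  simp only [Pi.zero_apply] at hj
  rcases lt_or_gt_of_ne hj with h | h
  · have hpos : 0 < f A x (.inr (.inr j)) := by simp only [f]; omega
    exact lt_of_lt_of_le hpos (Finset.single_le_sum (fun t _ => Nat.zero_le _) (Finset.mem_univ _))
  · have hpos : 0 < f A x (.inr (.inl j)) := by simp only [f]; omega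
    exact lt_of_lt_of_le hpos (Finset.single_le_sum (fun t _ => Nat.zero_le _) (Finset.mem_univ _))

lemma isPWO_aux (s : Set (Idx m K → ℕ)) : s.IsPWO :=
  Set.isPWO_of_wellQuasiOrderedLE s

def M (A : Matrix (Fin K) (Fin m) ℤ) : Set (Idx m K → ℕ) :=
  f A '' {v | memS A v ∧ v ≠ 0}

/-- Generators: nonzero lattice points of the cone whose image is minimal. -/
def Ω₀ (A : Matrix (Fin K) (Fin m) ℤ) : Set (Fin m → ℤ) :=
  {x | memS A x ∧ x ≠ 0 ∧ ∀ w ∈ M A, w ≤ f A x → w = f A x}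

lemma Ω₀_finite (A : Matrix (Fin K) (Fin m) ℤ) : (Ω₀ A).Finite := by
  set Mmin : Set (Idx m K → ℕ) := {u | u ∈ M A ∧ ∀ w ∈ M A, w ≤ u → w = u} with hMmin
  have hanti : IsAntichain (· ≤ ·) Mmin := by
    intro u hu v hv huv hle
    exact huv (hv.2 u hu.1 hle)
  have hfin : Mmin.Finite :=
    hanti.finite_of_partiallyWellOrderedOn (isPWO_aux Mmin)
  have himg : f A '' Ω₀ A ⊆ Mmin := by
    rintro _ ⟨x, ⟨hxS, hx0, hxmin⟩, rfl⟩
    exact ⟨⟨x, ⟨hxS, hx0⟩, rfl⟩, hxmin⟩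
  exact Set.Finite.of_finite_image (hfin.subset himg) (fun a _ b _ h => f_inj h)

lemma main (A : Matrix (Fin K) (Fin m) ℤ) :
    ∀ n (v : Fin m → ℤ), μ A v ≤ n → memS A v →
      ∃ c : (Fin m → ℤ) → ℕ, v = ∑ b ∈ (Ω₀_finite A).toFinset, c b • b := by
  intro n
  induction n with
  | zero =>
    intro v hμ hv
    unfold μ at hμ
    have hv0 : v = 0 := by
      funext j
      have h1 : f A v (.inr (.inl j)) = 0 := by
        have := Finset.single_le_sum (f := f A v) (fun t _ => Nat.zero_le _)
          (Finset.mem_univ (Sum.inr (Sum.inl j)))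
        omega
      have h2 : f A v (.inr (.inr j)) = 0 := by
        have := Finset.single_le_sum (f := f A v) (fun t _ => Nat.zero_le _)
          (Finset.mem_univ (Sum.inr (Sum.inr j)))
        omega
      simp only [f] at h1 h2
      simp only [Pi.zero_apply]
      omega
    exact ⟨0, by simp [hv0]⟩
  | succ n ih =>
    intro v hμ hv
    by_cases hv0 : v = 0
    · exact ⟨0, by simp [hv0]⟩
    · have hfv : f A v ∈ M A := ⟨v, ⟨hv, hv0⟩, rfl⟩
      set M' : Set (Idx m K → ℕ) := {u | u ∈ M A ∧ u ≤ f A v} with hM'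
      have hwf : M'.IsWF := (isPWO_aux M').isWF
      have hne : M'.Nonempty := ⟨f A v, hfv, le_refl _⟩
      have hzmem := hwf.min_mem hne
      obtain ⟨x, ⟨hxS, hx0⟩, hfx⟩ := hzmem.1
      have hzle : hwf.min hne ≤ f A v := hzmem.2
      have hfxle : f A x ≤ f A v := hfx ▸ hzle
      have hxΩ : x ∈ Ω₀ A := by
        refine ⟨hxS, hx0, ?_⟩
        intro w hw hwle
        have hwM' : w ∈ M' := ⟨hw, le_trans hwle hfxle⟩
        have hnlt := hwf.not_lt_min hne hwM'
        rw [← hfx] at hnlt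
        exact hwle.lt_or_eq.resolve_left hnlt
      obtain ⟨hsub, hμeq⟩ := step hxS hv hfxle
      have hμx : 0 < μ A x := μ_pos hx0
      obtain ⟨c, hc⟩ := ih (v - x) (by omega) hsub
      have hxmem : x ∈ (Ω₀_finite A).toFinset := (Set.Finite.mem_toFinset _).mpr hxΩ
      refine ⟨fun b => c b + if b = x then 1 else 0, ?_⟩
      have hsplit :
          ∑ b ∈ (Ω₀_finite A).toFinset, (c b + if b = x then 1 else 0) • b
            = (∑ b ∈ (Ω₀_finite A).toFinset, c b • b)
              + ∑ b ∈ (Ω₀_finite A).toFinset, (if b = x then 1 else 0 : ℕ) • b := by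
        rw [← Finset.sum_add_distrib]
        exact Finset.sum_congr rfl (fun b _ => add_smul _ _ _)
      have hdelta :
          ∑ b ∈ (Ω₀_finite A).toFinset, (if b = x then 1 else 0 : ℕ) • b = x := by
        rw [Finset.sum_congr rfl
          (fun b _ => show (if b = x then 1 else 0 : ℕ) • b = if b = x then b else 0 by
            split <;> simp)]
        rw [Finset.sum_ite_eq' _ x (fun b => b)]
        simp [hxmem]
      rw [hsplit, hdelta, ← hc]
      abel

end GordanAux

/-- Gordan's lemma: for a rational cone `P = {x : ℝ^m | A x ≥ 0}` with nonempty interior,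
the additive monoid `P ∩ ℤ^m` is finitely generated: there is a finite set `Ω` of lattice
points of `P` such that every lattice point of `P` is a nonnegative integer combination of
elements of `Ω`. -/
theorem rational_cone_lattice_monoid_fg
    (m K : ℕ) (A : Matrix (Fin K) (Fin m) ℤ)
    (hint : (interior {x : Fin m → ℝ | ∀ i : Fin K, 0 ≤ ∑ j : Fin m, (A i j : ℝ) * x j}).Nonempty) :
    ∃ Ω : Finset (Fin m → ℤ),
      (∀ b ∈ Ω, ∀ i : Fin K, 0 ≤ ∑ j : Fin m, A i j * b j) ∧
      (∀ v : Fin m → ℤ, (∀ i : Fin K, 0 ≤ ∑ j : Fin m, A i j * v j) →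
        ∃ c : (Fin m → ℤ) → ℕ, v = ∑ b ∈ Ω, c b • b) := by
  refine ⟨(GordanAux.Ω₀_finite A).toFinset, ?_, ?_⟩
  · intro b hb
    exact ((Set.Finite.mem_toFinset _).mp hb).1
  · intro v hv
    exact GordanAux.main A (GordanAux.μ A v) v le_rfl hv
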